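/- There exists a cardinal marriage market (U, V) with n ≥ 3 agents per side such that no matching σ is no-trade stable, i.e., for every matching σ there exist i, j with U(i,j) + V(i,j) > U(i,σ(i)) + V(σ⁻¹(j), j). In particular, the 3×3 market U = [[0,2,1],[1,2,0],[1,0,2]], V = [[2,1,0],[1,2,0],[0,1,2]] has no no-trade stable matching: its unique NTU stable and unique TU stable matching is the identity, yet U(1,2)+V(1,2) = 3 > 2 = U(1,1)+V(2,2). -/

import Mathlib

/-- `σ` is NTU stable: no blocking pair. -/
def NTUStable (n : ℕ) (U V : Fin n → Fin n → ℝ) (σ : Equiv.Perm (Fin n)) : Prop :=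
  ¬ ∃ i j : Fin n, U i (σ i) < U i j ∧ V (σ⁻¹ j) j < V i j

/-- `σ` is TU stable: supporting payoff vectors exist. -/
def TUStable (n : ℕ) (U V : Fin n → Fin n → ℝ) (σ : Equiv.Perm (Fin n)) : Prop :=
  ∃ u v : Fin n → ℝ, (∀ i j, U i j + V i j ≤ u i + v j) ∧
    (∀ i, u i + v (σ i) = U i (σ i) + V i (σ i))

/-- `σ` is no-trade stable. -/
def NoTradeStable (n : ℕ) (U V : Fin n → Fin n → ℝ) (σ : Equiv.Perm (Fin n)) : Prop :=
  ∀ i j, U i j + V i j ≤ U i (σ i) + V (σ⁻¹ j) j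

/-- Enumeration of the 6 permutations of `Fin 3` by their values and inverse values. -/
lemma perm3 (σ : Equiv.Perm (Fin 3)) :
    σ = 1 ∨
    (σ 0 = 1 ∧ σ 1 = 0 ∧ σ 2 = 2 ∧ σ⁻¹ 0 = 1 ∧ σ⁻¹ 1 = 0 ∧ σ⁻¹ 2 = 2) ∨
    (σ 0 = 2 ∧ σ 1 = 1 ∧ σ 2 = 0 ∧ σ⁻¹ 0 = 2 ∧ σ⁻¹ 1 = 1 ∧ σ⁻¹ 2 = 0) ∨
    (σ 0 = 0 ∧ σ 1 = 2 ∧ σ 2 = 1 ∧ σ⁻¹ 0 = 0 ∧ σ⁻¹ 1 = 2 ∧ σ⁻¹ 2 = 1) ∨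
    (σ 0 = 1 ∧ σ 1 = 2 ∧ σ 2 = 0 ∧ σ⁻¹ 0 = 2 ∧ σ⁻¹ 1 = 0 ∧ σ⁻¹ 2 = 1) ∨
    (σ 0 = 2 ∧ σ 1 = 0 ∧ σ 2 = 1 ∧ σ⁻¹ 0 = 1 ∧ σ⁻¹ 1 = 2 ∧ σ⁻¹ 2 = 0) := by
  revert σ; decide

/-- For the example market, every matching has a pair violating the no-trade inequality. -/
lemma main_violation (σ : Equiv.Perm (Fin 3)) :
    ∃ i j, (!![0, 2, 1; 1, 2, 0; 1, 0, 2] : Matrix (Fin 3) (Fin 3) ℝ) i (σ i) +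
        (!![2, 1, 0; 1, 2, 0; 0, 1, 2] : Matrix (Fin 3) (Fin 3) ℝ) (σ⁻¹ j) j <
      (!![0, 2, 1; 1, 2, 0; 1, 0, 2] : Matrix (Fin 3) (Fin 3) ℝ) i j +
        (!![2, 1, 0; 1, 2, 0; 0, 1, 2] : Matrix (Fin 3) (Fin 3) ℝ) i j := by
  rcases perm3 σ with h | ⟨h0, h1, h2, g0, g1, g2⟩ | ⟨h0, h1, h2, g0, g1, g2⟩ |
      ⟨h0, h1, h2, g0, g1, g2⟩ | ⟨h0, h1, h2, g0, g1, g2⟩ | ⟨h0, h1, h2, g0, g1, g2⟩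
  · subst h
    exact ⟨0, 1, by norm_num [Equiv.Perm.one_apply, Matrix.vecHead, Matrix.vecTail]⟩
  · exact ⟨1, 1, by rw [h1, g1]; norm_num [Matrix.vecHead, Matrix.vecTail]⟩
  · exact ⟨2, 2, by rw [h2, g2]; norm_num [Matrix.vecHead, Matrix.vecTail, Matrix.cons_val_two]⟩
  · exact ⟨1, 1, by rw [h1, g1]; norm_num [Matrix.vecHead, Matrix.vecTail, Matrix.cons_val_two]⟩
  · exact ⟨1, 1, by rw [h1, g1]; norm_num [Matrix.vecHead, Matrix.vecTail, Matrix.cons_val_two]⟩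
  · exact ⟨1, 1, by rw [h1, g1]; norm_num [Matrix.vecHead, Matrix.vecTail, Matrix.cons_val_two]⟩

theorem stmt_18 :
    (∃ n : ℕ, 3 ≤ n ∧ ∃ U V : Fin n → Fin n → ℝ,
      ∀ σ : Equiv.Perm (Fin n), ∃ i j, U i (σ i) + V (σ⁻¹ j) j < U i j + V i j) ∧
    (∀ U V : Fin 3 → Fin 3 → ℝ,
      U = !![0, 2, 1; 1, 2, 0; 1, 0, 2] → V = !![2, 1, 0; 1, 2, 0; 0, 1, 2] →
        (∀ σ : Equiv.Perm (Fin 3), NTUStable 3 U V σ ↔ σ = 1) ∧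
        (∀ σ : Equiv.Perm (Fin 3), TUStable 3 U V σ ↔ σ = 1) ∧
        (U 0 1 + V 0 1 = 3 ∧ U 0 0 + V 1 1 = 2 ∧ U 0 0 + V 1 1 < U 0 1 + V 0 1) ∧
        (∀ σ : Equiv.Perm (Fin 3), ¬ NoTradeStable 3 U V σ)) := by
  constructor
  · exact ⟨3, le_refl 3, _, _, main_violation⟩
  · intro U V hU hV
    subst hU; subst hV
    refine ⟨?_, ?_, ?_, ?_⟩
    · -- NTU stable iff identity
      intro σ
      constructor
      · intro hS
        rcases perm3 σ with h | ⟨h0, h1, h2, g0, g1, g2⟩ | ⟨h0, h1, h2, g0, g1, g2⟩ |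
            ⟨h0, h1, h2, g0, g1, g2⟩ | ⟨h0, h1, h2, g0, g1, g2⟩ | ⟨h0, h1, h2, g0, g1, g2⟩
        · exact h
        · exact absurd ⟨1, 1, by rw [h1, g1]; norm_num [Matrix.vecHead, Matrix.vecTail]⟩ hS
        · exact absurd ⟨2, 2, by rw [h2, g2]; norm_num [Matrix.vecHead, Matrix.vecTail, Matrix.cons_val_two]⟩ hS
        · exact absurd ⟨1, 1, by rw [h1, g1]; norm_num [Matrix.vecHead, Matrix.vecTail, Matrix.cons_val_two]⟩ hS
        · exact absurd ⟨1, 1, by rw [h1, g1]; norm_num [Matrix.vecHead, Matrix.vecTail, Matrix.cons_val_two]⟩ hS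
        · exact absurd ⟨1, 1, by rw [h1, g1]; norm_num [Matrix.vecHead, Matrix.vecTail, Matrix.cons_val_two]⟩ hS
      · rintro rfl ⟨i, j, hb1, hb2⟩
        simp only [inv_one, Equiv.Perm.one_apply] at hb1 hb2
        fin_cases i <;> fin_cases j <;>
          (revert hb1 hb2; norm_num [Matrix.vecHead, Matrix.vecTail, Matrix.cons_val_two])
    · -- TU stable iff identity
      intro σ
      constructor
      · rintro ⟨u, v, hle, heq⟩
        rcases perm3 σ with h | ⟨h0, h1, h2, g0, g1, g2⟩ | ⟨h0, h1, h2, g0, g1, g2⟩ |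
            ⟨h0, h1, h2, g0, g1, g2⟩ | ⟨h0, h1, h2, g0, g1, g2⟩ | ⟨h0, h1, h2, g0, g1, g2⟩
        · exact h
        all_goals {
          exfalso
          have e0 := heq 0; have e1 := heq 1; have e2 := heq 2
          rw [h0] at e0; rw [h1] at e1; rw [h2] at e2
          have d0 := hle 0 0; have d1 := hle 1 1; have d2 := hle 2 2
          norm_num [Matrix.vecHead, Matrix.vecTail, Matrix.cons_val_two] at e0 e1 e2 d0 d1 d2
          linarith }
      · rintro rfl
        refine ⟨![0, 1, 1], ![2, 3, 3], ?_, ?_⟩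
        · intro i j; fin_cases i <;> fin_cases j <;>
            norm_num [Matrix.vecHead, Matrix.vecTail]
        · intro i; fin_cases i <;>
            norm_num [Equiv.Perm.one_apply, Matrix.vecHead, Matrix.vecTail]
    · norm_num [Matrix.vecHead, Matrix.vecTail]
    · intro σ h
      obtain ⟨i, j, hij⟩ := main_violation σ
      exact absurd (h i j) (not_le.mpr hij)
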